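/- Let M be an S-semimodule over a commutative semiring S. Suppose M is an Auslander semimodule (Z(S) ⊆ Z_S(M)) and has Property (A). Then M[X] is an Auslander S[X]-semimodule, i.e., Z(S[X]) ⊆ Z_{S[X]}(M[X]). -/

import Mathlib

/-- The convolution action of a polynomial `f ∈ S[X]` on a "polynomial"
`g ∈ M[X]` (represented as a finitely supported function `ℕ →₀ M`). -/
noncomputable def polyAct {S M : Type*} [CommSemiring S] [AddCommMonoid M] [Module S M]
    (f : Polynomial S) (g : ℕ →₀ M) : ℕ →₀ M :=
  f.sum fun n s => g.sum fun k m => Finsupp.single (n + k) (s • m)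

/-- The set of zero-divisors of `S` on the semimodule `M`. -/
def zdSet (S : Type*) (M : Type*) [CommSemiring S] [AddCommMonoid M] [Module S M] : Set S :=
  {s : S | ∃ m : M, m ≠ 0 ∧ s • m = 0}

/-- An `S`-semimodule `M` has Property (A) if every finitely generated ideal of `S`
consisting of zero-divisors on `M` has a nonzero annihilator in `M`. -/
def PropertyA (S : Type*) (M : Type*) [CommSemiring S] [AddCommMonoid M] [Module S M] : Prop :=
  ∀ I : Ideal S, I.FG → (I : Set S) ⊆ zdSet S M →
    ∃ m : M, m ≠ 0 ∧ ∀ s ∈ I, s • m = 0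

/-- If `M` is an Auslander `S`-semimodule (`Z(S) ⊆ Z_S(M)`) with Property (A), then
`M[X]` is an Auslander `S[X]`-semimodule: every zero-divisor of the semiring `S[X]`
is a zero-divisor on `M[X]`. -/
theorem auslander_polyModule {S M : Type*} [CommSemiring S] [AddCommMonoid M] [Module S M]
    (haus : zdSet S S ⊆ zdSet S M) (hA : PropertyA S M) :
    ∀ f : Polynomial S, (∃ f' : Polynomial S, f' ≠ 0 ∧ f * f' = 0) →
      ∃ g : ℕ →₀ M, g ≠ 0 ∧ polyAct f g = 0 := by
  classical
  rintro f ⟨f', hf'0, hff'⟩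
  obtain ⟨a, ha, haf⟩ : ∃ a : S, a ≠ 0 ∧ a • f = 0 := by
    apply Polynomial.notMem_nonZeroDivisors_iff.mp
    intro hf
    exact hf'0 (hf.2 f' (by rw [mul_comm]; exact hff'))
  set I : Ideal S := Ideal.span ↑(f.support.image f.coeff) with hI
  have hIfg : I.FG := ⟨_, hI.symm⟩
  have hann : ∀ s ∈ I, s * a = 0 := by
    intro s hs
    refine Submodule.span_induction ?_ ?_ ?_ ?_ hs
    · rintro x hx
      simp only [Finset.coe_image, Set.mem_image, Finset.mem_coe] at hx
      obtain ⟨n, -, rfl⟩ := hx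
      have := congrArg (fun p => Polynomial.coeff p n) haf
      simpa [mul_comm] using this
    · simp
    · intro x y _ _ hx hy; rw [add_mul, hx, hy, add_zero]
    · intro c x _ hx; rw [smul_eq_mul, mul_assoc, hx, mul_zero]
  have hIsub : (I : Set S) ⊆ zdSet S M := by
    intro s hs
    exact haus ⟨a, ha, by simpa [smul_eq_mul] using hann s hs⟩
  obtain ⟨m, hm0, hm⟩ := hA I hIfg hIsub
  refine ⟨Finsupp.single 0 m, fun h => hm0 (by simpa using Finsupp.ext_iff.mp h 0), ?_⟩
  unfold polyAct
  apply Finset.sum_eq_zero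
  intro n hn
  have hcn : f.coeff n ∈ I := Ideal.subset_span (by simp [Finset.mem_image]; exact ⟨n, Polynomial.mem_support_iff.mp hn, rfl⟩)
  show ((Finsupp.single 0 m).sum fun k m' => Finsupp.single (n + k) (f.coeff n • m')) = 0
  rw [Finsupp.sum_single_index (by simp), hm _ hcn, Finsupp.single_zero]
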